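/- arXiv:2003.08613 — 5 statements merged into one kernel-verified Lean document; each statement's English description precedes it below -/
import Mathlib

section
/- Let Δ be a real p×q matrix and P a real symmetric (q+p)×(q+p) matrix. If the p×p matrix [−Δᵀ; I_p]ᵀ P [−Δᵀ; I_p] is negative definite and the q×q matrix [I_q; −D₁₁ᵀ]ᵀ P [I_q; −D₁₁ᵀ] is positive definite, then the matrix I_q − D₁₁Δ is invertible (well-posedness step in the proof of Theorem 1). -/
open Matrix

noncomputable section

/-- well-posedness step in the proof of Theorem 1. -/
theorem stmt2 {p q : ℕ} (D₁₁ : Matrix (Fin q) (Fin p) ℝ)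
    (Δ : Matrix (Fin p) (Fin q) ℝ)
    (P : Matrix (Fin q ⊕ Fin p) (Fin q ⊕ Fin p) ℝ) (hPsymm : P.IsSymm)
    (hneg : (-((fromRows (-Δᵀ) (1 : Matrix (Fin p) (Fin p) ℝ))ᵀ * P *
        fromRows (-Δᵀ) (1 : Matrix (Fin p) (Fin p) ℝ))).PosDef)
    (hpos : ((fromRows (1 : Matrix (Fin q) (Fin q) ℝ) (-D₁₁ᵀ))ᵀ * P *
        fromRows (1 : Matrix (Fin q) (Fin q) ℝ) (-D₁₁ᵀ)).PosDef) :
    IsUnit (1 - D₁₁ * Δ) := by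
  rw [Matrix.isUnit_iff_isUnit_det, isUnit_iff_ne_zero]
  intro h0
  -- transfer to det of (1 - Δ * D₁₁)ᵀ
  have h1 : ((1 : Matrix (Fin p) (Fin p) ℝ) - Δ * D₁₁)ᵀ.det = 0 := by
    rw [Matrix.det_transpose, Matrix.det_one_sub_mul_comm, h0]
  obtain ⟨v, hv, hveq⟩ := Matrix.exists_mulVec_eq_zero_iff.mpr h1
  -- from hveq: D₁₁ᵀ *ᵥ (Δᵀ *ᵥ v) = v
  have hvid : D₁₁ᵀ *ᵥ (Δᵀ *ᵥ v) = v := by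
    have := hveq
    rw [Matrix.transpose_sub, Matrix.transpose_one, Matrix.transpose_mul,
      Matrix.sub_mulVec, Matrix.one_mulVec, sub_eq_zero] at this
    rw [Matrix.mulVec_mulVec]
    exact this.symm
  set u : Fin q → ℝ := -(Δᵀ *ᵥ v) with hu
  set A : Matrix (Fin q ⊕ Fin p) (Fin p) ℝ :=
    fromRows (-Δᵀ) (1 : Matrix (Fin p) (Fin p) ℝ) with hA
  set B : Matrix (Fin q ⊕ Fin p) (Fin q) ℝ :=
    fromRows (1 : Matrix (Fin q) (Fin q) ℝ) (-D₁₁ᵀ) with hB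
  have hAB : A *ᵥ v = B *ᵥ u := by
    rw [hA, hB, fromRows_mulVec, fromRows_mulVec]
    simp [hu, Matrix.neg_mulVec, Matrix.mulVec_neg, ← Matrix.mulVec_mulVec, hvid]
  -- quadratic form identities
  have key : ∀ {n : Type} [Fintype n] (M : Matrix (Fin q ⊕ Fin p) n ℝ) (w : n → ℝ),
      w ⬝ᵥ ((Mᵀ * P * M) *ᵥ w) = (M *ᵥ w) ⬝ᵥ (P *ᵥ (M *ᵥ w)) := by
    intro n _ M w
    rw [← Matrix.mulVec_mulVec, ← Matrix.mulVec_mulVec, Matrix.dotProduct_mulVec,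
      Matrix.vecMul_transpose]
  have hneg' := hneg.dotProduct_mulVec_pos hv
  rw [Matrix.neg_mulVec, dotProduct_neg, star_trivial, key] at hneg'
  have hpos' := hpos.posSemidef.dotProduct_mulVec_nonneg u
  rw [star_trivial, key, ← hAB] at hpos'
  linarith
end
end

section
/- Suppose Y is a real symmetric n×n matrix, M is a real r×n matrix, 𝚫 is a set of real p×q matrices, P is a real symmetric (q+p)×(q+p) matrix satisfying the multiplier property for 𝚫, and LMI (1b) holds. Then for every Δ ∈ 𝚫 the matrix I_q − D₁₁Δ is invertible; i.e., the uncertain feedback interconnection is well posed for all admissible uncertainties. -/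
open Matrix

noncomputable section

/-- A real square matrix is Hurwitz if every eigenvalue of the associated
complex matrix has negative real part. -/
def IsHurwitz {k : ℕ} (A : Matrix (Fin k) (Fin k) ℝ) : Prop :=
  ∀ μ ∈ spectrum ℂ (A.map Complex.ofReal), μ.re < 0

/-- Multiplier property: `[−Δᵀ; I_p]ᵀ P [−Δᵀ; I_p] ≺ 0` for every `Δ` in the set. -/
def MultProp {p q : ℕ} (P : Matrix (Fin q ⊕ Fin p) (Fin q ⊕ Fin p) ℝ)
    (Δs : Set (Matrix (Fin p) (Fin q) ℝ)) : Prop :=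
  ∀ Δ ∈ Δs,
    (-((fromRows (-Δᵀ) (1 : Matrix (Fin p) (Fin p) ℝ))ᵀ * P *
        fromRows (-Δᵀ) (1 : Matrix (Fin p) (Fin p) ℝ))).PosDef

/-- LMI (1b): `Tᵀ · blkdiag([[0, I],[I, 0]], P) · T ≻ 0` with the block rows
`[I, 0]`, `[−Āᵀ, −C̄₁ᵀ]`, `[0, I]`, `[−B₁ᵀ, −D₁₁ᵀ]` of `T`. -/
def LMI1b {n p q r : ℕ} (A : Matrix (Fin n) (Fin n) ℝ) (B₁ : Matrix (Fin n) (Fin p) ℝ)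
    (B₃ : Matrix (Fin n) (Fin r) ℝ) (C₁ : Matrix (Fin q) (Fin n) ℝ)
    (D₁₁ : Matrix (Fin q) (Fin p) ℝ) (D₁₃ : Matrix (Fin q) (Fin r) ℝ)
    (Y : Matrix (Fin n) (Fin n) ℝ) (M : Matrix (Fin r) (Fin n) ℝ)
    (P : Matrix (Fin q ⊕ Fin p) (Fin q ⊕ Fin p) ℝ) : Prop :=
  let Ab := A * Y + B₃ * M
  let Cb₁ := C₁ * Y + D₁₃ * M
  let T : Matrix ((Fin n ⊕ Fin n) ⊕ (Fin q ⊕ Fin p)) (Fin n ⊕ Fin q) ℝ :=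
    fromRows (fromBlocks 1 0 (-Abᵀ) (-Cb₁ᵀ)) (fromBlocks 0 1 (-B₁ᵀ) (-D₁₁ᵀ))
  let Mid : Matrix ((Fin n ⊕ Fin n) ⊕ (Fin q ⊕ Fin p)) ((Fin n ⊕ Fin n) ⊕ (Fin q ⊕ Fin p)) ℝ :=
    fromBlocks (fromBlocks 0 1 1 0) 0 0 P
  (Tᵀ * Mid * T).PosDef

/-- well-posedness of the uncertain interconnection for all admissible
uncertainties. -/
theorem stmt4 {n p q r : ℕ}
    (A : Matrix (Fin n) (Fin n) ℝ) (B₁ : Matrix (Fin n) (Fin p) ℝ)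
    (B₃ : Matrix (Fin n) (Fin r) ℝ) (C₁ : Matrix (Fin q) (Fin n) ℝ)
    (D₁₁ : Matrix (Fin q) (Fin p) ℝ) (D₁₃ : Matrix (Fin q) (Fin r) ℝ)
    (Y : Matrix (Fin n) (Fin n) ℝ) (hYsymm : Y.IsSymm)
    (M : Matrix (Fin r) (Fin n) ℝ)
    (Δs : Set (Matrix (Fin p) (Fin q) ℝ))
    (P : Matrix (Fin q ⊕ Fin p) (Fin q ⊕ Fin p) ℝ) (hPsymm : P.IsSymm)
    (hmult : MultProp P Δs)
    (hlmi : LMI1b A B₁ B₃ C₁ D₁₁ D₁₃ Y M P) :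
    ∀ Δ ∈ Δs, IsUnit (1 - D₁₁ * Δ) := by
  intro Δ hΔ
  by_contra hnu
  -- the transpose is singular, get a nonzero kernel vector v
  have hdet : (((1 : Matrix (Fin q) (Fin q) ℝ) - D₁₁ * Δ)ᵀ).det = 0 := by
    rw [Matrix.det_transpose]
    by_contra h
    exact hnu ((Matrix.isUnit_iff_isUnit_det _).2 (isUnit_iff_ne_zero.2 h))
  obtain ⟨v, hv0, hv⟩ := (Matrix.exists_mulVec_eq_zero_iff).2 hdet
  have hvv : Δᵀ *ᵥ (D₁₁ᵀ *ᵥ v) = v := by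
    rw [Matrix.transpose_sub, Matrix.transpose_mul, Matrix.transpose_one,
      Matrix.sub_mulVec, Matrix.one_mulVec, sub_eq_zero] at hv
    rw [Matrix.mulVec_mulVec, ← hv]
  set w : Fin p → ℝ := -(D₁₁ᵀ *ᵥ v) with hw
  set z : (Fin q ⊕ Fin p) → ℝ := Sum.elim v w with hz
  -- from the LMI: 0 < z ⬝ᵥ P *ᵥ z
  have hx0 : (Sum.elim (0 : Fin n → ℝ) v) ≠ 0 := by
    intro h
    apply hv0
    ext i
    have := congrFun h (Sum.inr i)
    simpa using this
  have hpos := Matrix.PosDef.dotProduct_mulVec_pos hlmi hx0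
  have hposz : 0 < z ⬝ᵥ P *ᵥ z := by
    have hcalc : star (Sum.elim (0 : Fin n → ℝ) v) ⬝ᵥ
        ((Matrix.transpose (fromRows (fromBlocks 1 0 (-(A * Y + B₃ * M)ᵀ) (-(C₁ * Y + D₁₃ * M)ᵀ))
            (fromBlocks 0 1 (-B₁ᵀ) (-D₁₁ᵀ)) : Matrix ((Fin n ⊕ Fin n) ⊕ (Fin q ⊕ Fin p)) (Fin n ⊕ Fin q) ℝ)) *
          (fromBlocks (fromBlocks (0 : Matrix (Fin n) (Fin n) ℝ) 1 1 0) 0 0 P :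
            Matrix ((Fin n ⊕ Fin n) ⊕ (Fin q ⊕ Fin p)) ((Fin n ⊕ Fin n) ⊕ (Fin q ⊕ Fin p)) ℝ) *
          (fromRows (fromBlocks 1 0 (-(A * Y + B₃ * M)ᵀ) (-(C₁ * Y + D₁₃ * M)ᵀ))
            (fromBlocks 0 1 (-B₁ᵀ) (-D₁₁ᵀ)) : Matrix ((Fin n ⊕ Fin n) ⊕ (Fin q ⊕ Fin p)) (Fin n ⊕ Fin q) ℝ)) *ᵥ (Sum.elim (0 : Fin n → ℝ) v)
        = z ⬝ᵥ P *ᵥ z := by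
      rw [star_trivial, Matrix.mul_assoc, ← Matrix.mulVec_mulVec, ← Matrix.mulVec_mulVec,
        Matrix.dotProduct_mulVec, Matrix.vecMul_transpose]
      simp only [Matrix.fromRows_mulVec, Matrix.fromBlocks_mulVec, Sum.elim_comp_inl,
        Sum.elim_comp_inr, Matrix.mulVec_zero, Matrix.zero_mulVec, Matrix.one_mulVec,
        add_zero, zero_add, Matrix.neg_mulVec, Matrix.mulVec_neg,
        sumElim_dotProduct_sumElim, zero_dotProduct, dotProduct_zero,
        dotProduct_neg, neg_dotProduct, neg_zero, neg_neg, hz, hw]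
    exact hcalc ▸ hpos
  -- from the multiplier property: z ⬝ᵥ P *ᵥ z ≤ 0
  have hns := (hmult Δ hΔ).posSemidef.dotProduct_mulVec_nonneg w
  have hFz : fromRows (-Δᵀ) (1 : Matrix (Fin p) (Fin p) ℝ) *ᵥ w = z := by
    rw [Matrix.fromRows_mulVec, Matrix.one_mulVec, Matrix.neg_mulVec, hw]
    simp only [Matrix.mulVec_neg, neg_neg, hvv, hz, hw]
  have hneg : z ⬝ᵥ P *ᵥ z ≤ 0 := by
    have hcalc : star w ⬝ᵥ
        (-((fromRows (-Δᵀ) (1 : Matrix (Fin p) (Fin p) ℝ))ᵀ * P *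
          fromRows (-Δᵀ) (1 : Matrix (Fin p) (Fin p) ℝ))) *ᵥ w = -(z ⬝ᵥ P *ᵥ z) := by
      rw [star_trivial, Matrix.neg_mulVec, dotProduct_neg, Matrix.mul_assoc,
        ← Matrix.mulVec_mulVec, ← Matrix.mulVec_mulVec, Matrix.dotProduct_mulVec,
        Matrix.vecMul_transpose, hFz]
    rw [hcalc] at hns
    linarith
  linarith

end
end

section
/- Suppose Y is a real symmetric n×n matrix, M is a real r×n matrix, and P is a real symmetric (q+p)×(q+p) matrix for which LMI (1b) holds. Let Δ be a real p×q matrix such that I_q − D₁₁Δ is invertible and such that [−Δᵀ; I_p]ᵀ P [−Δᵀ; I_p] is negative definite. Then, with W := Δ(I_q − D₁₁Δ)⁻¹, the matrix (Ā + B₁WC̄₁) + (Ā + B₁WC̄₁)ᵀ is negative definite (the multiplier elimination step yielding the closed-loop Lyapunov inequality in the proof of Theorem 1). -/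
open Matrix

noncomputable section

lemma myPosDefConj {m l : Type*} [Fintype m] [Fintype l]
    {G : Matrix m m ℝ} (hG : G.PosDef) (B : Matrix m l ℝ)
    (hB : Function.Injective B.mulVec) : (Bᵀ * G * B).PosDef := by
  refine PosDef.of_dotProduct_mulVec_pos ?_ ?_
  · have h := isHermitian_conjTranspose_mul_mul B hG.1
    simpa [conjTranspose_eq_transpose_of_trivial] using h
  · intro x hx
    have hBx : B *ᵥ x ≠ 0 := fun h => hx (hB (h.trans (B.mulVec_zero).symm))
    have h := hG.dotProduct_mulVec_pos hBx
    simpa [star_trivial, dotProduct_mulVec, Matrix.mul_assoc, ← Matrix.vecMul_vecMul,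
      vecMul_transpose] using h

/-- multiplier elimination step yielding the closed-loop Lyapunov
inequality in the proof of Theorem 1. -/
theorem stmt5 {n p q r : ℕ}
    (A : Matrix (Fin n) (Fin n) ℝ) (B₁ : Matrix (Fin n) (Fin p) ℝ)
    (B₃ : Matrix (Fin n) (Fin r) ℝ) (C₁ : Matrix (Fin q) (Fin n) ℝ)
    (D₁₁ : Matrix (Fin q) (Fin p) ℝ) (D₁₃ : Matrix (Fin q) (Fin r) ℝ)
    (Y : Matrix (Fin n) (Fin n) ℝ) (hYsymm : Y.IsSymm)
    (M : Matrix (Fin r) (Fin n) ℝ)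
    (P : Matrix (Fin q ⊕ Fin p) (Fin q ⊕ Fin p) ℝ) (hPsymm : P.IsSymm)
    (hlmi : LMI1b A B₁ B₃ C₁ D₁₁ D₁₃ Y M P)
    (Δ : Matrix (Fin p) (Fin q) ℝ) (hwp : IsUnit (1 - D₁₁ * Δ))
    (hneg : (-((fromRows (-Δᵀ) (1 : Matrix (Fin p) (Fin p) ℝ))ᵀ * P *
        fromRows (-Δᵀ) (1 : Matrix (Fin p) (Fin p) ℝ))).PosDef)
    (W : Matrix (Fin p) (Fin q) ℝ) (hW : W = Δ * (1 - D₁₁ * Δ)⁻¹) :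
    (-(((A * Y + B₃ * M) + B₁ * W * (C₁ * Y + D₁₃ * M)) +
        ((A * Y + B₃ * M) + B₁ * W * (C₁ * Y + D₁₃ * M))ᵀ)).PosDef := by
  have hG := hlmi
  unfold LMI1b at hG
  dsimp only at hG
  set Ab := A * Y + B₃ * M with hAb
  set Cb := C₁ * Y + D₁₃ * M with hCb
  set S := 1 - D₁₁ * Δ with hS
  have hdet : IsUnit S.det := (Matrix.isUnit_iff_isUnit_det S).mp hwp
  have hSinv : S⁻¹ * S = 1 := Matrix.nonsing_inv_mul S hdet
  have h1 : S + D₁₁ * Δ = 1 := by rw [hS]; abel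
  have hWkey : Δ + W * (D₁₁ * Δ) = W := by
    have e : Δ * S⁻¹ * (S + D₁₁ * Δ) = Δ + Δ * S⁻¹ * (D₁₁ * Δ) := by
      rw [Matrix.mul_add, Matrix.mul_assoc Δ S⁻¹ S, hSinv, Matrix.mul_one]
    rw [hW, ← e, h1, Matrix.mul_one]
  set K := Wᵀ * B₁ᵀ with hKdef
  set E := -B₁ᵀ - D₁₁ᵀ * K with hEdef
  have ht : Δᵀ + Δᵀ * D₁₁ᵀ * Wᵀ = Wᵀ := by
    have h2 := congrArg Matrix.transpose hWkey
    simpa [Matrix.transpose_add, Matrix.transpose_mul, Matrix.mul_assoc] using h2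
  have hK : (-Δᵀ) * E = K := by
    have expand : (-Δᵀ) * E = (Δᵀ + Δᵀ * D₁₁ᵀ * Wᵀ) * B₁ᵀ := by
      rw [hEdef, hKdef]
      simp only [Matrix.mul_sub, Matrix.mul_neg, Matrix.neg_mul, Matrix.add_mul,
        neg_neg, Matrix.mul_assoc]
      abel
    rw [expand, ht, hKdef]
  set N := Ab + B₁ * W * Cb with hN
  set F := fromRows (-Δᵀ) (1 : Matrix (Fin p) (Fin p) ℝ) with hF
  set U := fromRows (1 : Matrix (Fin n) (Fin n) ℝ) K with hU
  set T : Matrix ((Fin n ⊕ Fin n) ⊕ (Fin q ⊕ Fin p)) (Fin n ⊕ Fin q) ℝ :=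
    fromRows (fromBlocks 1 0 (-Abᵀ) (-Cbᵀ)) (fromBlocks 0 1 (-B₁ᵀ) (-D₁₁ᵀ)) with hT
  set Mid : Matrix ((Fin n ⊕ Fin n) ⊕ (Fin q ⊕ Fin p)) ((Fin n ⊕ Fin n) ⊕ (Fin q ⊕ Fin p)) ℝ :=
    fromBlocks (fromBlocks 0 1 1 0) 0 0 P with hMid
  have hNt : -Abᵀ * 1 + -Cbᵀ * K = -Nᵀ := by
    rw [hN, hKdef]
    simp only [Matrix.transpose_add, Matrix.transpose_mul, Matrix.mul_one,
      Matrix.neg_mul, Matrix.mul_assoc]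
    abel
  have hFE : F * E = fromRows K E := by
    rw [hF, Matrix.fromRows_mul, hK, Matrix.one_mul]
  have hTU : T * U = fromRows (fromRows 1 (-Nᵀ)) (F * E) := by
    rw [hFE, hT, hU, Matrix.fromRows_mul, Matrix.fromBlocks_mul_fromRows,
      Matrix.fromBlocks_mul_fromRows, hNt]
    simp only [Matrix.one_mul, Matrix.mul_one, Matrix.zero_mul, Matrix.mul_zero,
      add_zero, zero_add, Matrix.neg_mul, ← sub_eq_add_neg, ← hEdef]
  have hA : (fromRows (1 : Matrix (Fin n) (Fin n) ℝ) (-Nᵀ))ᵀ *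
      (fromBlocks 0 1 1 0 : Matrix (Fin n ⊕ Fin n) (Fin n ⊕ Fin n) ℝ) *
      fromRows (1 : Matrix (Fin n) (Fin n) ℝ) (-Nᵀ) = -(N + Nᵀ) := by
    rw [Matrix.transpose_fromRows, Matrix.transpose_one, Matrix.transpose_neg,
      Matrix.transpose_transpose, Matrix.fromCols_mul_fromBlocks]
    simp only [Matrix.one_mul, Matrix.mul_one, Matrix.zero_mul, Matrix.mul_zero,
      add_zero, zero_add]
    rw [Matrix.fromCols_mul_fromRows, Matrix.one_mul, Matrix.mul_one]
    abel
  have key : Uᵀ * (Tᵀ * Mid * T) * U = -(N + Nᵀ) + Eᵀ * (Fᵀ * P * F) * E := by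
    have e1 : Uᵀ * (Tᵀ * Mid * T) * U = (T * U)ᵀ * Mid * (T * U) := by
      simp only [Matrix.transpose_mul, Matrix.mul_assoc]
    rw [e1, hTU, hMid, Matrix.transpose_fromRows, Matrix.fromCols_mul_fromBlocks,
      Matrix.mul_zero, Matrix.mul_zero, add_zero, zero_add,
      Matrix.fromCols_mul_fromRows, hA]
    have hB : (F * E)ᵀ * P * (F * E) = Eᵀ * (Fᵀ * P * F) * E := by
      simp only [Matrix.transpose_mul, Matrix.mul_assoc]
    rw [hB]
  have hUinj : Function.Injective U.mulVec := by
    intro x y hxy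
    funext i
    have h := congrFun hxy (Sum.inl i)
    simpa [hU, Matrix.fromRows_mulVec] using h
  have PD1 : (Uᵀ * (Tᵀ * Mid * T) * U).PosDef := myPosDefConj hG U hUinj
  have PSD : (Eᵀ * (-(Fᵀ * P * F)) * E).PosSemidef := by
    have h := hneg.posSemidef.conjTranspose_mul_mul_same E
    simpa [conjTranspose_eq_transpose_of_trivial] using h
  have final : -(N + Nᵀ) = Uᵀ * (Tᵀ * Mid * T) * U + Eᵀ * (-(Fᵀ * P * F)) * E := by
    rw [key, Matrix.mul_neg, Matrix.neg_mul]
    abel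
  rw [final]
  exact PD1.add_posSemidef PSD

end
end

section
/- Suppose Y is a real symmetric n×n matrix, M is a real r×n matrix, γ > 0, and P_k is a real symmetric (q+p)×(q+p) matrix for which LMI (1c) holds. Let Δ be a real p×q matrix such that I_q − D₁₁Δ is invertible and such that [−Δᵀ; I_p]ᵀ P_k [−Δᵀ; I_p] is negative definite. Then, with W := Δ(I_q − D₁₁Δ)⁻¹, 𝒜 := Ā + B₁WC̄₁, ℬ := B₂ + B₁WD₁₂, 𝒞 := C̄₂ + D₂₁WC̄₁ and 𝒟 := D₂₂ + D₂₁WD₁₂, the symmetric block matrix [[𝒜 + 𝒜ᵀ, 𝒞ᵀ, ℬ],[𝒞, −γ²I_l, 𝒟],[ℬᵀ, 𝒟ᵀ, −I_m]] is negative definite (the multiplier elimination step yielding the closed-loop dual H∞ inequality in the proof of Theorem 1). -/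
open Matrix

noncomputable section

/-- LMI (1c): `T′ᵀ · blkdiag([[0, I],[I, 0]], P_k, [[γ²I, 0],[0, −I]]) · T′ ≻ 0` with the
block rows `[I,0,0]`, `[−Āᵀ,−C̄₁ᵀ,−C̄₂ᵀ]`, `[0,I,0]`, `[−B₁ᵀ,−D₁₁ᵀ,−D₂₁ᵀ]`, `[0,0,I]`,
`[−B₂ᵀ,−D₁₂ᵀ,−D₂₂ᵀ]` of `T′`. -/
def LMI1c {n p q m l r : ℕ} (A : Matrix (Fin n) (Fin n) ℝ) (B₁ : Matrix (Fin n) (Fin p) ℝ)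
    (B₂ : Matrix (Fin n) (Fin m) ℝ) (B₃ : Matrix (Fin n) (Fin r) ℝ)
    (C₁ : Matrix (Fin q) (Fin n) ℝ) (C₂ : Matrix (Fin l) (Fin n) ℝ)
    (D₁₁ : Matrix (Fin q) (Fin p) ℝ) (D₁₂ : Matrix (Fin q) (Fin m) ℝ)
    (D₁₃ : Matrix (Fin q) (Fin r) ℝ) (D₂₁ : Matrix (Fin l) (Fin p) ℝ)
    (D₂₂ : Matrix (Fin l) (Fin m) ℝ) (D₂₃ : Matrix (Fin l) (Fin r) ℝ)
    (Y : Matrix (Fin n) (Fin n) ℝ) (M : Matrix (Fin r) (Fin n) ℝ)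
    (Pk : Matrix (Fin q ⊕ Fin p) (Fin q ⊕ Fin p) ℝ) (γ : ℝ) : Prop :=
  let Ab := A * Y + B₃ * M
  let Cb₁ := C₁ * Y + D₁₃ * M
  let Cb₂ := C₂ * Y + D₂₃ * M
  let T' : Matrix (((Fin n ⊕ Fin n) ⊕ (Fin q ⊕ Fin p)) ⊕ (Fin l ⊕ Fin m))
      ((Fin n ⊕ Fin q) ⊕ Fin l) ℝ :=
    fromRows
      (fromRows
        (fromBlocks (fromCols 1 0) 0 (fromCols (-Abᵀ) (-Cb₁ᵀ)) (-Cb₂ᵀ))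
        (fromBlocks (fromCols 0 1) 0 (fromCols (-B₁ᵀ) (-D₁₁ᵀ)) (-D₂₁ᵀ)))
      (fromBlocks (fromCols 0 0) 1 (fromCols (-B₂ᵀ) (-D₁₂ᵀ)) (-D₂₂ᵀ))
  let Mid : Matrix (((Fin n ⊕ Fin n) ⊕ (Fin q ⊕ Fin p)) ⊕ (Fin l ⊕ Fin m))
      (((Fin n ⊕ Fin n) ⊕ (Fin q ⊕ Fin p)) ⊕ (Fin l ⊕ Fin m)) ℝ :=
    fromBlocks (fromBlocks (fromBlocks 0 1 1 0) 0 0 Pk) 0 0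
      (fromBlocks ((γ ^ 2) • (1 : Matrix (Fin l) (Fin l) ℝ)) 0 0 (-1))
  (T'ᵀ * Mid * T').PosDef
section auxiliary

variable {α β : Type*} [Fintype α] [Fintype β]

private lemma dot_t (A : Matrix β α ℝ) (x : α → ℝ) (y : β → ℝ) :
    x ⬝ᵥ Aᵀ *ᵥ y = y ⬝ᵥ A *ᵥ x := by
  rw [dotProduct_mulVec, vecMul_transpose, dotProduct_comm]

private lemma dot_self_nonneg' (x : α → ℝ) : 0 ≤ x ⬝ᵥ x :=
  Finset.sum_nonneg fun i _ => mul_self_nonneg _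

private lemma dot_self_pos' (x : α → ℝ) (hx : x ≠ 0) : 0 < x ⬝ᵥ x :=
  lt_of_le_of_ne (dot_self_nonneg' x) fun h => hx (dotProduct_self_eq_zero.mp h.symm)

end auxiliary

/-- multiplier elimination step yielding the closed-loop dual H∞
inequality in the proof of Theorem 1. -/
theorem stmt8 {n p q m l r : ℕ}
    (A : Matrix (Fin n) (Fin n) ℝ) (B₁ : Matrix (Fin n) (Fin p) ℝ)
    (B₂ : Matrix (Fin n) (Fin m) ℝ) (B₃ : Matrix (Fin n) (Fin r) ℝ)
    (C₁ : Matrix (Fin q) (Fin n) ℝ) (C₂ : Matrix (Fin l) (Fin n) ℝ)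
    (D₁₁ : Matrix (Fin q) (Fin p) ℝ) (D₁₂ : Matrix (Fin q) (Fin m) ℝ)
    (D₁₃ : Matrix (Fin q) (Fin r) ℝ) (D₂₁ : Matrix (Fin l) (Fin p) ℝ)
    (D₂₂ : Matrix (Fin l) (Fin m) ℝ) (D₂₃ : Matrix (Fin l) (Fin r) ℝ)
    (Y : Matrix (Fin n) (Fin n) ℝ) (hYsymm : Y.IsSymm)
    (M : Matrix (Fin r) (Fin n) ℝ) (γ : ℝ) (hγ : 0 < γ)
    (Pk : Matrix (Fin q ⊕ Fin p) (Fin q ⊕ Fin p) ℝ) (hPksymm : Pk.IsSymm)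
    (hlmi : LMI1c A B₁ B₂ B₃ C₁ C₂ D₁₁ D₁₂ D₁₃ D₂₁ D₂₂ D₂₃ Y M Pk γ)
    (Δ : Matrix (Fin p) (Fin q) ℝ) (hwp : IsUnit (1 - D₁₁ * Δ))
    (hneg : (-((fromRows (-Δᵀ) (1 : Matrix (Fin p) (Fin p) ℝ))ᵀ * Pk *
        fromRows (-Δᵀ) (1 : Matrix (Fin p) (Fin p) ℝ))).PosDef)
    (W : Matrix (Fin p) (Fin q) ℝ) (hW : W = Δ * (1 - D₁₁ * Δ)⁻¹)
    (𝒜 : Matrix (Fin n) (Fin n) ℝ)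
    (h𝒜 : 𝒜 = (A * Y + B₃ * M) + B₁ * W * (C₁ * Y + D₁₃ * M))
    (ℬ : Matrix (Fin n) (Fin m) ℝ) (hℬ : ℬ = B₂ + B₁ * W * D₁₂)
    (𝒞 : Matrix (Fin l) (Fin n) ℝ)
    (h𝒞 : 𝒞 = (C₂ * Y + D₂₃ * M) + D₂₁ * W * (C₁ * Y + D₁₃ * M))
    (𝒟 : Matrix (Fin l) (Fin m) ℝ) (h𝒟 : 𝒟 = D₂₂ + D₂₁ * W * D₁₂) :
    (-(fromBlocks
        (fromBlocks (𝒜 + 𝒜ᵀ) (𝒞ᵀ) 𝒞 (-((γ ^ 2) • (1 : Matrix (Fin l) (Fin l) ℝ))))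
        (fromRows ℬ 𝒟) (fromCols ℬᵀ 𝒟ᵀ)
        (-(1 : Matrix (Fin m) (Fin m) ℝ)))).PosDef := by
  -- the push-through identity for W
  have hdet : IsUnit (1 - D₁₁ * Δ).det := (Matrix.isUnit_iff_isUnit_det _).mp hwp
  have hWeq : W = Δ + W * D₁₁ * Δ := by
    have h1 : W * (1 - D₁₁ * Δ) = Δ := by
      rw [hW]; exact Matrix.nonsing_inv_mul_cancel_right _ _ hdet
    have h3 : W * (1 - D₁₁ * Δ) + W * D₁₁ * Δ = W := by
      rw [Matrix.mul_sub, Matrix.mul_one, Matrix.mul_assoc, sub_add_cancel]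
    rw [h1] at h3
    exact h3.symm
  have hWT : Wᵀ = Δᵀ + Δᵀ * (D₁₁ᵀ * Wᵀ) := by
    conv_lhs => rw [hWeq]
    simp [transpose_add, transpose_mul, Matrix.mul_assoc]
  refine Matrix.PosDef.of_dotProduct_mulVec_pos ?_ ?_
  · -- Hermitian part
    refine Matrix.IsHermitian.neg ?_
    show _ᴴ = _
    ext i j
    rcases i with (i | i) | i <;> rcases j with (j | j) | j <;>
      simp [Matrix.conjTranspose_apply, fromBlocks, fromRows_apply_inl, fromRows_apply_inr, fromCols,
        Matrix.one_apply, eq_comm] <;> ring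
  · intro v hv
    set x : Fin n → ℝ := fun i => v (Sum.inl (Sum.inl i)) with hxdef
    set z : Fin l → ℝ := fun i => v (Sum.inl (Sum.inr i)) with hzdef
    set u : Fin m → ℝ := fun i => v (Sum.inr i) with hudef
    have hv' : v = Sum.elim (Sum.elim x z) u := by
      funext i; rcases i with (i | i) | i <;> rfl
    set Ab := A * Y + B₃ * M with hAb
    set Cb₁ := C₁ * Y + D₁₃ * M with hCb₁
    set Cb₂ := C₂ * Y + D₂₃ * M with hCb₂
    set v₀ : Fin p → ℝ := B₁ᵀ *ᵥ x + D₂₁ᵀ *ᵥ z with hv₀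
    set b : Fin q → ℝ := Wᵀ *ᵥ v₀ with hb
    set t : Fin p → ℝ := -(v₀ + D₁₁ᵀ *ᵥ b) with ht
    set w : Fin m → ℝ := ℬᵀ *ᵥ x + 𝒟ᵀ *ᵥ z with hwdef
    -- goal-side scalar reduction
    have hSv : (fromBlocks
        (fromBlocks (𝒜 + 𝒜ᵀ) (𝒞ᵀ) 𝒞 (-((γ ^ 2) • (1 : Matrix (Fin l) (Fin l) ℝ))))
        (fromRows ℬ 𝒟) (fromCols ℬᵀ 𝒟ᵀ) (-(1 : Matrix (Fin m) (Fin m) ℝ)))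
          *ᵥ Sum.elim (Sum.elim x z) u =
        Sum.elim (Sum.elim ((𝒜 + 𝒜ᵀ) *ᵥ x + 𝒞ᵀ *ᵥ z + ℬ *ᵥ u)
          (𝒞 *ᵥ x - (γ ^ 2) • z + 𝒟 *ᵥ u)) (ℬᵀ *ᵥ x + 𝒟ᵀ *ᵥ z - u) := by
      funext i
      rcases i with (i | i) | i <;>
        simp [fromBlocks_mulVec, fromRows_mulVec, fromCols_mulVec_sumElim,
          neg_mulVec, smul_mulVec, Matrix.add_mulVec, Sum.elim_comp_inl,
          Sum.elim_comp_inr, sub_eq_add_neg] <;> ring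
    have hgoal : star v ⬝ᵥ ((-(fromBlocks
        (fromBlocks (𝒜 + 𝒜ᵀ) (𝒞ᵀ) 𝒞 (-((γ ^ 2) • (1 : Matrix (Fin l) (Fin l) ℝ))))
        (fromRows ℬ 𝒟) (fromCols ℬᵀ 𝒟ᵀ) (-(1 : Matrix (Fin m) (Fin m) ℝ)))) *ᵥ v) =
        -(x ⬝ᵥ (𝒜 *ᵥ x) + x ⬝ᵥ (𝒜ᵀ *ᵥ x) + x ⬝ᵥ (𝒞ᵀ *ᵥ z) + x ⬝ᵥ (ℬ *ᵥ u)
          + z ⬝ᵥ (𝒞 *ᵥ x) - γ ^ 2 * (z ⬝ᵥ z) + z ⬝ᵥ (𝒟 *ᵥ u)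
          + u ⬝ᵥ (ℬᵀ *ᵥ x) + u ⬝ᵥ (𝒟ᵀ *ᵥ z) - u ⬝ᵥ u) := by
      rw [star_trivial, hv', neg_mulVec, hSv]
      simp only [dotProduct_neg, sumElim_dotProduct_sumElim, dotProduct_add,
        dotProduct_sub, dotProduct_smul, smul_eq_mul, Matrix.add_mulVec, dotProduct_add]
      ring
    rw [hgoal]
    by_cases hxz : x = 0 ∧ z = 0
    · obtain ⟨hx0, hz0⟩ := hxz
      have hu0 : u ≠ 0 := by
        intro h
        apply hv
        rw [hv', hx0, hz0, h]
        funext i; rcases i with (i | i) | i <;> rfl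
      rw [hx0, hz0]
      simp only [zero_dotProduct, dotProduct_zero, mulVec_zero, add_zero, zero_add,
        mul_zero, sub_zero, zero_sub, neg_neg]
      exact dot_self_pos' u hu0
    · -- main case : use the LMI at y = (x, b, z)
      set T' : Matrix (((Fin n ⊕ Fin n) ⊕ (Fin q ⊕ Fin p)) ⊕ (Fin l ⊕ Fin m))
          ((Fin n ⊕ Fin q) ⊕ Fin l) ℝ :=
        fromRows
          (fromRows
            (fromBlocks (fromCols 1 0) 0 (fromCols (-Abᵀ) (-Cb₁ᵀ)) (-Cb₂ᵀ))
            (fromBlocks (fromCols 0 1) 0 (fromCols (-B₁ᵀ) (-D₁₁ᵀ)) (-D₂₁ᵀ)))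
          (fromBlocks (fromCols 0 0) 1 (fromCols (-B₂ᵀ) (-D₁₂ᵀ)) (-D₂₂ᵀ)) with hT'
      set Mid : Matrix (((Fin n ⊕ Fin n) ⊕ (Fin q ⊕ Fin p)) ⊕ (Fin l ⊕ Fin m))
          (((Fin n ⊕ Fin n) ⊕ (Fin q ⊕ Fin p)) ⊕ (Fin l ⊕ Fin m)) ℝ :=
        fromBlocks (fromBlocks (fromBlocks 0 1 1 0) 0 0 Pk) 0 0
          (fromBlocks ((γ ^ 2) • (1 : Matrix (Fin l) (Fin l) ℝ)) 0 0 (-1)) with hMid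
      have hlmi' : (T'ᵀ * Mid * T').PosDef := hlmi
      set s : Fin n → ℝ := -(Abᵀ *ᵥ x) - Cb₁ᵀ *ᵥ b - Cb₂ᵀ *ᵥ z with hs
      set w' : Fin m → ℝ := -(B₂ᵀ *ᵥ x) - D₁₂ᵀ *ᵥ b - D₂₂ᵀ *ᵥ z with hw'def
      set y : (Fin n ⊕ Fin q) ⊕ Fin l → ℝ := Sum.elim (Sum.elim x b) z with hy
      have hy0 : y ≠ 0 := by
        intro h
        apply hxz
        constructor
        · funext i; exact congrFun h (Sum.inl (Sum.inl i))
        · funext i; exact congrFun h (Sum.inr i)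
      have hTy : T' *ᵥ y = Sum.elim (Sum.elim (Sum.elim x s) (Sum.elim b t))
          (Sum.elim z w') := by
        funext i
        rcases i with ((i | i) | (i | i)) | (i | i) <;>
          simp [hT', hy, hs, ht, hw'def, hb, hv₀, fromRows_mulVec, fromBlocks_mulVec,
            fromCols_mulVec_sumElim, Sum.elim_comp_inl, Sum.elim_comp_inr,
            neg_mulVec, Matrix.mulVec_add, Matrix.mulVec_neg, sub_eq_add_neg] <;> ring
      have hMidTy : Mid *ᵥ Sum.elim (Sum.elim (Sum.elim x s) (Sum.elim b t))
          (Sum.elim z w') = Sum.elim (Sum.elim (Sum.elim s x) (Pk *ᵥ Sum.elim b t))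
          (Sum.elim ((γ ^ 2) • z) (-w')) := by
        funext i
        rcases i with ((i | i) | i) | (i | i) <;>
          simp [hMid, fromBlocks_mulVec, Sum.elim_comp_inl, Sum.elim_comp_inr,
            neg_mulVec, smul_mulVec]
      have hkey := hlmi'.dotProduct_mulVec_pos hy0
      rw [star_trivial, show (T'ᵀ * Mid * T') *ᵥ y = T'ᵀ *ᵥ (Mid *ᵥ (T' *ᵥ y)) by
        rw [mulVec_mulVec, mulVec_mulVec, Matrix.mul_assoc], dot_t, hTy, hMidTy] at hkey
      simp only [sumElim_dotProduct_sumElim, smul_dotProduct, neg_dotProduct,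
        smul_eq_mul] at hkey
      -- hkey : 0 < s ⬝ᵥ x + x ⬝ᵥ s + (Pk *ᵥ Sum.elim b t) ⬝ᵥ Sum.elim b t
      --        + (γ^2 * (z ⬝ᵥ z) + -(w' ⬝ᵥ w'))
      -- the multiplier term is nonpositive
      have hbt : Sum.elim b t = fromRows (-Δᵀ) (1 : Matrix (Fin p) (Fin p) ℝ) *ᵥ t := by
        rw [fromRows_mulVec, one_mulVec]
        congr 1
        rw [neg_mulVec, ht, mulVec_neg, neg_neg, mulVec_add, hb, mulVec_mulVec,
          mulVec_mulVec, ← Matrix.add_mulVec, Matrix.mul_assoc, ← hWT]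
      have hPkle : (Pk *ᵥ Sum.elim b t) ⬝ᵥ Sum.elim b t ≤ 0 := by
        have h0 := hneg.posSemidef.dotProduct_mulVec_nonneg t
        rw [star_trivial, neg_mulVec, dotProduct_neg, show
          ((fromRows (-Δᵀ) (1 : Matrix (Fin p) (Fin p) ℝ))ᵀ * Pk *
            fromRows (-Δᵀ) (1 : Matrix (Fin p) (Fin p) ℝ)) *ᵥ t =
          (fromRows (-Δᵀ) (1 : Matrix (Fin p) (Fin p) ℝ))ᵀ *ᵥ
            (Pk *ᵥ (fromRows (-Δᵀ) (1 : Matrix (Fin p) (Fin p) ℝ) *ᵥ t)) by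
            rw [mulVec_mulVec, mulVec_mulVec, Matrix.mul_assoc], dot_t, ← hbt,
          dotProduct_comm] at h0
        rw [dotProduct_comm]
        linarith
      -- w' = -w
      have hw'w : w' = -w := by
        rw [hw'def, hwdef, hℬ, h𝒟, hb, hv₀]
        simp only [transpose_add, transpose_mul, Matrix.add_mulVec, Matrix.mulVec_add,
          mulVec_mulVec, Matrix.mul_assoc]
        abel
      -- relating the x ⬝ᵥ s block to the closed-loop matrices
      have hbC : x ⬝ᵥ (Cb₁ᵀ *ᵥ b) = x ⬝ᵥ ((B₁ * W * Cb₁)ᵀ *ᵥ x)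
          + x ⬝ᵥ ((D₂₁ * W * Cb₁)ᵀ *ᵥ z) := by
        rw [hb, hv₀]
        simp only [transpose_mul, Matrix.mulVec_add, mulVec_mulVec, dotProduct_add,
          Matrix.mul_assoc]
      have hq1 : x ⬝ᵥ ((B₁ * W * Cb₁)ᵀ *ᵥ x) = x ⬝ᵥ ((B₁ * W * Cb₁) *ᵥ x) := dot_t _ _ _
      have hq2 : x ⬝ᵥ ((D₂₁ * W * Cb₁)ᵀ *ᵥ z) = z ⬝ᵥ ((D₂₁ * W * Cb₁) *ᵥ x) := dot_t _ _ _
      have hq3 : x ⬝ᵥ (Abᵀ *ᵥ x) = x ⬝ᵥ (Ab *ᵥ x) := dot_t _ _ _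
      have hq4 : x ⬝ᵥ (Cb₂ᵀ *ᵥ z) = z ⬝ᵥ (Cb₂ *ᵥ x) := dot_t _ _ _
      have hAx : x ⬝ᵥ (𝒜 *ᵥ x) = x ⬝ᵥ (Ab *ᵥ x) + x ⬝ᵥ ((B₁ * W * Cb₁) *ᵥ x) := by
        rw [h𝒜, Matrix.add_mulVec, dotProduct_add]
      have hAtx : x ⬝ᵥ (𝒜ᵀ *ᵥ x) = x ⬝ᵥ (𝒜 *ᵥ x) := dot_t _ _ _
      have hCx : z ⬝ᵥ (𝒞 *ᵥ x) = z ⬝ᵥ (Cb₂ *ᵥ x) + z ⬝ᵥ ((D₂₁ * W * Cb₁) *ᵥ x) := by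
        rw [h𝒞, Matrix.add_mulVec, dotProduct_add]
      have hCtz : x ⬝ᵥ (𝒞ᵀ *ᵥ z) = z ⬝ᵥ (𝒞 *ᵥ x) := dot_t _ _ _
      have hxs : x ⬝ᵥ s = -(x ⬝ᵥ (Ab *ᵥ x)) - x ⬝ᵥ (Cb₁ᵀ *ᵥ b) - z ⬝ᵥ (Cb₂ *ᵥ x) := by
        rw [hs]
        simp only [dotProduct_sub, dotProduct_neg, hq4, hq3]
      have hsx : s ⬝ᵥ x = x ⬝ᵥ s := dotProduct_comm _ _
      -- cross terms
      have hBu : x ⬝ᵥ (ℬ *ᵥ u) = u ⬝ᵥ (ℬᵀ *ᵥ x) := by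
        have h := dot_t ℬᵀ x u; rwa [transpose_transpose] at h
      have hDu : z ⬝ᵥ (𝒟 *ᵥ u) = u ⬝ᵥ (𝒟ᵀ *ᵥ z) := by
        have h := dot_t 𝒟ᵀ z u; rwa [transpose_transpose] at h
      have huw : u ⬝ᵥ w = u ⬝ᵥ (ℬᵀ *ᵥ x) + u ⬝ᵥ (𝒟ᵀ *ᵥ z) := by
        rw [hwdef, dotProduct_add]
      have hww' : w' ⬝ᵥ w' = w ⬝ᵥ w := by rw [hw'w]; simp
      have husw : 0 ≤ (u - w) ⬝ᵥ (u - w) := dot_self_nonneg' _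
      have hexp : (u - w) ⬝ᵥ (u - w) = u ⬝ᵥ u - 2 * (u ⬝ᵥ w) + w ⬝ᵥ w := by
        simp only [sub_dotProduct, dotProduct_sub]
        rw [dotProduct_comm w u]; ring
      linarith

end
end

section
/- Let γ > 0 and let 𝒜 (n×n), ℬ (n×m), 𝒞 (l×n), 𝒟 (l×m) be real matrices. Suppose there exists a real symmetric positive definite n×n matrix X such that the symmetric block matrix [[𝒜ᵀX + X𝒜, Xℬ, 𝒞ᵀ],[ℬᵀX, −γ²I_m, 𝒟ᵀ],[𝒞, 𝒟, −I_l]] is negative definite. Then 𝒜 is Hurwitz and sup over ω ∈ ℝ of ‖𝒞(iωI − 𝒜)⁻¹ℬ + 𝒟‖ is strictly smaller than γ (primal bounded real lemma with H∞ performance bound, used in the robust control toolchain of the paper). -/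
open Matrix

noncomputable section

/-- The ℓ²-operator (spectral) norm of a complex matrix. -/
def specNorm {l m : ℕ} (G : Matrix (Fin l) (Fin m) ℂ) : ℝ :=
  ‖LinearMap.toContinuousLinearMap (Matrix.toEuclideanLin G)‖

/-- Frequency response `C (iωI − A)⁻¹ B + D` of a real state-space system. -/
def freqResp {n l m : ℕ} (Acl : Matrix (Fin n) (Fin n) ℝ) (Bcl : Matrix (Fin n) (Fin m) ℝ)
    (Ccl : Matrix (Fin l) (Fin n) ℝ) (Dcl : Matrix (Fin l) (Fin m) ℝ) (ω : ℝ) :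
    Matrix (Fin l) (Fin m) ℂ :=
  (Ccl.map Complex.ofReal) *
    ((Complex.I * (ω : ℂ)) • (1 : Matrix (Fin n) (Fin n) ℂ) - Acl.map Complex.ofReal)⁻¹ *
    (Bcl.map Complex.ofReal) + Dcl.map Complex.ofReal


lemma star_sum_elim {p q : Type*} (a : p → ℂ) (b : q → ℂ) :
    star (Sum.elim a b) = Sum.elim (star a) (star b) := by
  funext i; cases i <;> simp

lemma re_quad {N : Type*} [Fintype N] (Q : Matrix N N ℝ) (z : N → ℂ) :
    (star z ⬝ᵥ (Q.map Complex.ofReal) *ᵥ z).re =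
      (fun i => (z i).re) ⬝ᵥ Q *ᵥ (fun i => (z i).re) +
      (fun i => (z i).im) ⬝ᵥ Q *ᵥ (fun i => (z i).im) := by
  simp only [dotProduct, mulVec, map_apply, Finset.mul_sum, Complex.re_sum, Pi.star_apply]
  rw [← Finset.sum_add_distrib]
  refine Finset.sum_congr rfl fun i _ => ?_
  rw [← Finset.sum_add_distrib]
  refine Finset.sum_congr rfl fun j _ => ?_
  simp [Complex.mul_re, Complex.conj_re, Complex.conj_im]


lemma re_star_dot_self {N : Type*} [Fintype N] (u : N → ℂ) :
    (star u ⬝ᵥ u).re = ∑ i, ‖u i‖ ^ 2 := by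
  simp only [dotProduct, Complex.re_sum, Pi.star_apply]
  refine Finset.sum_congr rfl fun i _ => ?_
  simp [Complex.mul_re, Complex.conj_re, Complex.conj_im, Complex.sq_norm, Complex.normSq_apply]


lemma re_star_dot_self_nonneg {N : Type*} [Fintype N] (u : N → ℂ) :
    0 ≤ (star u ⬝ᵥ u).re := by
  rw [re_star_dot_self]
  positivity

lemma exists_eps {N : Type*} [Fintype N] [DecidableEq N] (Q : Matrix N N ℝ) (hQ : Q.PosDef) :
    ∃ ε > 0, ∀ z : N → ℝ, ε * (z ⬝ᵥ z) ≤ z ⬝ᵥ Q *ᵥ z := by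
  have hcont : Continuous fun z : N → ℝ => z ⬝ᵥ Q *ᵥ z := by
    simp only [dotProduct, mulVec]
    exact continuous_finset_sum _ fun i _ => (continuous_apply i).mul
      (continuous_finset_sum _ fun j _ => (continuous_const.mul (continuous_apply j)))
  have hcont2 : Continuous fun z : N → ℝ => z ⬝ᵥ z := by
    simp only [dotProduct]
    exact continuous_finset_sum _ fun i _ => (continuous_apply i).mul (continuous_apply i)
  cases isEmpty_or_nonempty N with
  | inl h =>
    refine ⟨1, one_pos, fun z => ?_⟩
    have : z = 0 := Subsingleton.elim _ _
    simp [this]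
  | inr h =>
    set S : Set (N → ℝ) := {z | z ⬝ᵥ z = 1} with hS
    have hSc : IsCompact S := by
      apply Metric.isCompact_of_isClosed_isBounded
      · exact isClosed_eq hcont2 continuous_const
      · apply Bornology.IsBounded.subset (Metric.isBounded_closedBall (x := (0 : N → ℝ)) (r := 1))
        intro z hz
        simp only [Metric.mem_closedBall, dist_zero_right]
        rw [pi_norm_le_iff_of_nonneg (by norm_num)]
        intro i
        have h1 : z i * z i ≤ z ⬝ᵥ z := by
          have := Finset.single_le_sum (f := fun j => z j * z j)
            (fun j _ => mul_self_nonneg (z j)) (Finset.mem_univ i)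
          simpa [dotProduct] using this
        rw [hz] at h1
        rw [Real.norm_eq_abs]
        exact abs_le_one_iff_mul_self_le_one.mpr h1
    have hSne : S.Nonempty := by
      obtain ⟨i⟩ := h
      refine ⟨Pi.single i 1, ?_⟩
      simp [hS, dotProduct, Pi.single_apply]
    obtain ⟨z₀, hz₀S, hz₀min⟩ := hSc.exists_isMinOn hSne hcont.continuousOn
    have hz₀ne : z₀ ≠ 0 := by
      intro h0
      rw [h0] at hz₀S
      simp [hS, dotProduct] at hz₀S
    refine ⟨z₀ ⬝ᵥ Q *ᵥ z₀, by simpa [star_trivial] using hQ.dotProduct_mulVec_pos hz₀ne, fun z => ?_⟩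
    by_cases hz : z = 0
    · simp [hz]
    · have hzz : 0 < z ⬝ᵥ z := by
        rcases lt_or_eq_of_le (Finset.sum_nonneg fun i _ => mul_self_nonneg (z i) :
          (0:ℝ) ≤ z ⬝ᵥ z) with h' | h'
        · exact h'
        · exfalso; apply hz
          funext i
          have h1 : z i * z i ≤ z ⬝ᵥ z := by
            have := Finset.single_le_sum (f := fun j => z j * z j)
              (fun j _ => mul_self_nonneg (z j)) (Finset.mem_univ i)
            simpa [dotProduct] using this
          simp only [Pi.zero_apply]
          simp only [dotProduct] at h1
          nlinarith [mul_self_nonneg (z i)]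
      set r := Real.sqrt (z ⬝ᵥ z) with hr
      have hrpos : 0 < r := Real.sqrt_pos.mpr hzz
      have hr2 : r * r = z ⬝ᵥ z := Real.mul_self_sqrt hzz.le
      set u := r⁻¹ • z with hu
      have huS : u ∈ S := by
        simp only [hS, hu, Set.mem_setOf_eq, smul_dotProduct, dotProduct_smul, smul_eq_mul]
        rw [← hr2]
        field_simp
      have hmin := hz₀min huS
      -- g u = r⁻² * g z
      have hgu : u ⬝ᵥ Q *ᵥ u = r⁻¹ * (r⁻¹ * (z ⬝ᵥ Q *ᵥ z)) := by
        simp [hu, smul_dotProduct, dotProduct_smul, mulVec_smul, smul_eq_mul]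
      have : z₀ ⬝ᵥ Q *ᵥ z₀ ≤ r⁻¹ * (r⁻¹ * (z ⬝ᵥ Q *ᵥ z)) := by
        simpa [hgu] using hmin
      calc (z₀ ⬝ᵥ Q *ᵥ z₀) * (z ⬝ᵥ z) ≤ (r⁻¹ * (r⁻¹ * (z ⬝ᵥ Q *ᵥ z))) * (z ⬝ᵥ z) := by
            apply mul_le_mul_of_nonneg_right this hzz.le
        _ = z ⬝ᵥ Q *ᵥ z := by
            rw [← hr2]
            field_simp

local notation "ℂ𝕄" A => Matrix.map A Complex.ofReal

lemma cT {p q : Type*} (A : Matrix p q ℝ) :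
    (A.map Complex.ofReal)ᴴ = Aᵀ.map Complex.ofReal := by
  ext i j; simp [conjTranspose_apply, Complex.conj_ofReal]

lemma adj {p q : Type*} [Fintype p] [Fintype q] (A : Matrix p q ℝ) (x : q → ℂ) (y : p → ℂ) :
    star x ⬝ᵥ ((Aᵀ.map Complex.ofReal) *ᵥ y) = star ((A.map Complex.ofReal) *ᵥ x) ⬝ᵥ y := by
  rw [dotProduct_mulVec, star_mulVec, cT]

lemma star_sum_elim' {p q : Type*} (a : p → ℂ) (b : q → ℂ) :
    star (Sum.elim a b) = Sum.elim (star a) (star b) := by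
  funext i; cases i <;> simp

lemma hQmap {n m l : ℕ} (γ : ℝ) (X 𝒜 : Matrix (Fin n) (Fin n) ℝ) (ℬ : Matrix (Fin n) (Fin m) ℝ)
    (𝒞 : Matrix (Fin l) (Fin n) ℝ) (𝒟 : Matrix (Fin l) (Fin m) ℝ) :
    (fromBlocks
        (fromBlocks (𝒜ᵀ * X + X * 𝒜) (X * ℬ) (ℬᵀ * X)
          (-((γ ^ 2) • (1 : Matrix (Fin m) (Fin m) ℝ))))
        (fromRows 𝒞ᵀ 𝒟ᵀ) (fromCols 𝒞 𝒟)
        (-(1 : Matrix (Fin l) (Fin l) ℝ))).map Complex.ofReal =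
      fromBlocks
        (fromBlocks (𝒜ᵀ.map Complex.ofReal * X.map Complex.ofReal
            + X.map Complex.ofReal * 𝒜.map Complex.ofReal)
          (X.map Complex.ofReal * ℬ.map Complex.ofReal)
          (ℬᵀ.map Complex.ofReal * X.map Complex.ofReal)
          (-(((γ : ℂ) ^ 2) • (1 : Matrix (Fin m) (Fin m) ℂ))))
        (fromRows (𝒞ᵀ.map Complex.ofReal) (𝒟ᵀ.map Complex.ofReal))
        (fromCols (𝒞.map Complex.ofReal) (𝒟.map Complex.ofReal))
        (-(1 : Matrix (Fin l) (Fin l) ℂ)) := by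
  ext i j
  rcases i with (i | i) | i <;> rcases j with (j | j) | j <;>
    simp [fromBlocks, fromCols, mul_apply, one_apply, Pi.smul_apply, smul_eq_mul,
      apply_ite, fromRows_apply_inl, fromRows_apply_inr]
  split_ifs <;> tauto

lemma quad_eq {n m l : ℕ} (γ : ℝ) (X 𝒜 : Matrix (Fin n) (Fin n) ℝ) (ℬ : Matrix (Fin n) (Fin m) ℝ)
    (𝒞 : Matrix (Fin l) (Fin n) ℝ) (𝒟 : Matrix (Fin l) (Fin m) ℝ)
    (x : Fin n → ℂ) (v : Fin m → ℂ) (w : Fin l → ℂ) :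
    star (Sum.elim (Sum.elim x v) w) ⬝ᵥ
      ((fromBlocks
        (fromBlocks (𝒜ᵀ * X + X * 𝒜) (X * ℬ) (ℬᵀ * X)
          (-((γ ^ 2) • (1 : Matrix (Fin m) (Fin m) ℝ))))
        (fromRows 𝒞ᵀ 𝒟ᵀ) (fromCols 𝒞 𝒟)
        (-(1 : Matrix (Fin l) (Fin l) ℝ))).map Complex.ofReal) *ᵥ (Sum.elim (Sum.elim x v) w) =
      star (𝒜.map Complex.ofReal *ᵥ x + ℬ.map Complex.ofReal *ᵥ v) ⬝ᵥ (X.map Complex.ofReal *ᵥ x)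
      + star x ⬝ᵥ (X.map Complex.ofReal *ᵥ (𝒜.map Complex.ofReal *ᵥ x + ℬ.map Complex.ofReal *ᵥ v))
      + star (𝒞.map Complex.ofReal *ᵥ x + 𝒟.map Complex.ofReal *ᵥ v) ⬝ᵥ w
      + star w ⬝ᵥ (𝒞.map Complex.ofReal *ᵥ x + 𝒟.map Complex.ofReal *ᵥ v)
      - (γ : ℂ) ^ 2 * (star v ⬝ᵥ v) - star w ⬝ᵥ w := by
  rw [hQmap]
  rw [fromBlocks_mulVec]
  simp only [Sum.elim_comp_inl, Sum.elim_comp_inr]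
  rw [fromBlocks_mulVec, fromRows_mulVec, fromCols_mulVec_sumElim]
  simp only [Sum.elim_comp_inl, Sum.elim_comp_inr, star_sum_elim', sumElim_dotProduct_sumElim]
  simp only [add_mulVec, mulVec_add, neg_mulVec, smul_mulVec, one_mulVec, ← mulVec_mulVec,
    dotProduct_add, add_dotProduct, dotProduct_neg, neg_dotProduct, dotProduct_smul,
    smul_eq_mul, star_add]
  simp only [sumElim_dotProduct_sumElim, dotProduct_add, dotProduct_neg, dotProduct_smul,
    smul_eq_mul]
  rw [adj 𝒜, adj ℬ, adj 𝒞, adj 𝒟]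
  ring

lemma re_star_dot_self_pos {N : Type*} [Fintype N] {u : N → ℂ} (hu : u ≠ 0) :
    0 < (star u ⬝ᵥ u).re := by
  rw [re_star_dot_self]
  obtain ⟨i, hi⟩ := Function.ne_iff.mp hu
  refine Finset.sum_pos' (fun j _ => by positivity) ⟨i, Finset.mem_univ i, pow_pos (norm_pos_iff.mpr hi) 2⟩

/-- primal bounded real lemma with H∞ performance bound. -/
theorem stmt9 {n m l : ℕ} (γ : ℝ) (hγ : 0 < γ)
    (𝒜 : Matrix (Fin n) (Fin n) ℝ) (ℬ : Matrix (Fin n) (Fin m) ℝ)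
    (𝒞 : Matrix (Fin l) (Fin n) ℝ) (𝒟 : Matrix (Fin l) (Fin m) ℝ)
    (hX : ∃ X : Matrix (Fin n) (Fin n) ℝ, X.IsSymm ∧ X.PosDef ∧
      (-(fromBlocks
        (fromBlocks (𝒜ᵀ * X + X * 𝒜) (X * ℬ) (ℬᵀ * X)
          (-((γ ^ 2) • (1 : Matrix (Fin m) (Fin m) ℝ))))
        (fromRows 𝒞ᵀ 𝒟ᵀ) (fromCols 𝒞 𝒟)
        (-(1 : Matrix (Fin l) (Fin l) ℝ)))).PosDef) :
    IsHurwitz 𝒜 ∧ (⨆ ω : ℝ, specNorm (freqResp 𝒜 ℬ 𝒞 𝒟 ω)) < γ := by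
  obtain ⟨X, hXs, hXpd, hQpd⟩ := hX
  set Q : Matrix ((Fin n ⊕ Fin m) ⊕ Fin l) ((Fin n ⊕ Fin m) ⊕ Fin l) ℝ :=
    fromBlocks
        (fromBlocks (𝒜ᵀ * X + X * 𝒜) (X * ℬ) (ℬᵀ * X)
          (-((γ ^ 2) • (1 : Matrix (Fin m) (Fin m) ℝ))))
        (fromRows 𝒞ᵀ 𝒟ᵀ) (fromCols 𝒞 𝒟)
        (-(1 : Matrix (Fin l) (Fin l) ℝ)) with hQdef
  obtain ⟨ε, hε, hεQ⟩ := exists_eps _ hQpd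
  have hreal : ∀ z : ((Fin n ⊕ Fin m) ⊕ Fin l) → ℝ, z ⬝ᵥ Q *ᵥ z ≤ -(ε * (z ⬝ᵥ z)) := by
    intro z
    have h := hεQ z
    rw [neg_mulVec, dotProduct_neg] at h
    linarith
  have hcomplex : ∀ z : ((Fin n ⊕ Fin m) ⊕ Fin l) → ℂ,
      (star z ⬝ᵥ (Q.map Complex.ofReal) *ᵥ z).re ≤ -(ε * (star z ⬝ᵥ z).re) := by
    intro z
    have h1 := re_quad Q z
    have h2 := re_quad (1 : Matrix ((Fin n ⊕ Fin m) ⊕ Fin l) _ ℝ) z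
    rw [Matrix.map_one _ Complex.ofReal_zero Complex.ofReal_one] at h2
    simp only [one_mulVec] at h2
    rw [h1, h2]
    have ha := hreal fun i => (z i).re
    have hb := hreal fun i => (z i).im
    linarith
  have key : ∀ (x : Fin n → ℂ) (v : Fin m → ℂ) (w : Fin l → ℂ),
      star (𝒜.map Complex.ofReal *ᵥ x + ℬ.map Complex.ofReal *ᵥ v) ⬝ᵥ (X.map Complex.ofReal *ᵥ x)
        + star x ⬝ᵥ (X.map Complex.ofReal *ᵥ
          (𝒜.map Complex.ofReal *ᵥ x + ℬ.map Complex.ofReal *ᵥ v)) = 0 →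
      w = 𝒞.map Complex.ofReal *ᵥ x + 𝒟.map Complex.ofReal *ᵥ v →
      (star w ⬝ᵥ w).re ≤ (γ ^ 2 - ε) * (star v ⬝ᵥ v).re := by
    intro x v w hmix hw
    have hq := quad_eq γ X 𝒜 ℬ 𝒞 𝒟 x v w
    rw [← hw, hmix, zero_add, ← hQdef] at hq
    have hz := hcomplex (Sum.elim (Sum.elim x v) w)
    rw [hq] at hz
    have hsplit : (star (Sum.elim (Sum.elim x v) w) ⬝ᵥ (Sum.elim (Sum.elim x v) w)) =
        star x ⬝ᵥ x + (star v ⬝ᵥ v + star w ⬝ᵥ w) := by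
      rw [star_sum_elim', star_sum_elim', sumElim_dotProduct_sumElim,
        sumElim_dotProduct_sumElim, add_assoc]
    rw [hsplit] at hz
    have hγ2 : ((γ:ℂ)^2 * (star v ⬝ᵥ v)).re = γ^2 * (star v ⬝ᵥ v).re := by
      rw [show ((γ:ℂ)^2) = ((γ^2 : ℝ) : ℂ) by push_cast; ring, Complex.re_ofReal_mul]
    simp only [Complex.add_re, Complex.sub_re, hγ2] at hz
    have h1 := re_star_dot_self_nonneg x
    have h3 := re_star_dot_self_nonneg w
    nlinarith [mul_nonneg hε.le h1, mul_nonneg hε.le h3]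
  have hHurwitz : ∀ μ ∈ spectrum ℂ (𝒜.map Complex.ofReal), μ.re < 0 := by
    intro μ hμ
    rw [spectrum.mem_iff] at hμ
    have hdet : (algebraMap ℂ (Matrix (Fin n) (Fin n) ℂ) μ - 𝒜.map Complex.ofReal).det = 0 := by
      by_contra h
      exact hμ ((Matrix.isUnit_iff_isUnit_det _).mpr (isUnit_iff_ne_zero.mpr h))
    obtain ⟨x, hx0, hx⟩ := (Matrix.exists_mulVec_eq_zero_iff).mpr hdet
    have hAx : (𝒜.map Complex.ofReal) *ᵥ x = μ • x := by
      rw [sub_mulVec, Algebra.algebraMap_eq_smul_one, smul_mulVec, one_mulVec] at hx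
      have := sub_eq_zero.mp hx
      exact this.symm
    have hq := quad_eq γ X 𝒜 ℬ 𝒞 𝒟 x 0 0
    simp only [mulVec_zero, add_zero, star_zero, zero_dotProduct, dotProduct_zero,
      mul_zero, sub_zero, zero_add] at hq
    rw [← hQdef, hAx] at hq
    have hz := hcomplex (Sum.elim (Sum.elim x 0) 0)
    rw [hq] at hz
    have hq2 : star (μ • x) ⬝ᵥ (X.map Complex.ofReal *ᵥ x)
        + star x ⬝ᵥ (X.map Complex.ofReal *ᵥ (μ • x))
        = ((2 * μ.re : ℝ) : ℂ) * (star x ⬝ᵥ (X.map Complex.ofReal *ᵥ x)) := by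
      rw [star_smul, smul_dotProduct, mulVec_smul, dotProduct_smul, ← Complex.add_conj]
      simp only [smul_eq_mul, starRingEnd_apply]
      ring
    rw [hq2] at hz
    rw [Complex.re_ofReal_mul] at hz
    have hqre : 0 < (star x ⬝ᵥ (X.map Complex.ofReal *ᵥ x)).re := by
      rw [re_quad X x]
      set a := fun i => (x i).re
      set b := fun i => (x i).im
      have hab : a ≠ 0 ∨ b ≠ 0 := by
        by_contra h
        push_neg at h
        apply hx0
        funext i
        have h1 := congrFun h.1 i
        have h2 := congrFun h.2 i
        exact Complex.ext (by simpa using h1) (by simpa using h2)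
      have hsa : (0:ℝ) ≤ a ⬝ᵥ X *ᵥ a := by simpa [star_trivial] using hXpd.posSemidef.dotProduct_mulVec_nonneg a
      have hsb : (0:ℝ) ≤ b ⬝ᵥ X *ᵥ b := by simpa [star_trivial] using hXpd.posSemidef.dotProduct_mulVec_nonneg b
      rcases hab with ha | hb
      · have := hXpd.dotProduct_mulVec_pos ha
        simp only [star_trivial] at this
        linarith
      · have := hXpd.dotProduct_mulVec_pos hb
        simp only [star_trivial] at this
        linarith
    have hsplit : (star (Sum.elim (Sum.elim x (0 : Fin m → ℂ)) (0 : Fin l → ℂ)) ⬝ᵥ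
        (Sum.elim (Sum.elim x 0) 0)) = star x ⬝ᵥ x := by
      rw [star_sum_elim', star_sum_elim', sumElim_dotProduct_sumElim,
        sumElim_dotProduct_sumElim]
      simp
    rw [hsplit] at hz
    have hxx := re_star_dot_self_pos hx0
    nlinarith [mul_pos hε hxx]
  have hG : ∀ ω : ℝ, ∀ v : Fin m → ℂ,
      (star ((freqResp 𝒜 ℬ 𝒞 𝒟 ω) *ᵥ v) ⬝ᵥ ((freqResp 𝒜 ℬ 𝒞 𝒟 ω) *ᵥ v)).re
        ≤ (γ ^ 2 - ε) * (star v ⬝ᵥ v).re := by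
    intro ω v
    set S : Matrix (Fin n) (Fin n) ℂ :=
      (Complex.I * (ω:ℂ)) • 1 - 𝒜.map Complex.ofReal with hSdef
    by_cases hS : IsUnit S.det
    · set x := S⁻¹ *ᵥ (ℬ.map Complex.ofReal *ᵥ v) with hxdef
      have hSx : S *ᵥ x = ℬ.map Complex.ofReal *ᵥ v := by
        rw [hxdef, mulVec_mulVec, mul_nonsing_inv _ hS, one_mulVec]
      have hcon : 𝒜.map Complex.ofReal *ᵥ x + ℬ.map Complex.ofReal *ᵥ v
          = (Complex.I * (ω:ℂ)) • x := by
        rw [← hSx, hSdef, sub_mulVec, smul_mulVec, one_mulVec]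
        abel
      have hfr : (freqResp 𝒜 ℬ 𝒞 𝒟 ω) *ᵥ v
          = 𝒞.map Complex.ofReal *ᵥ x + 𝒟.map Complex.ofReal *ᵥ v := by
        simp only [freqResp, ← hSdef, add_mulVec, ← mulVec_mulVec, hxdef]
      rw [hfr]
      refine key x v _ ?_ rfl
      rw [hcon, star_smul, smul_dotProduct, mulVec_smul, dotProduct_smul]
      simp only [smul_eq_mul, Complex.star_def, _root_.map_mul, Complex.conj_I, Complex.conj_ofReal]
      ring
    · have hSinv : S⁻¹ = 0 := Matrix.nonsing_inv_apply_not_isUnit _ hS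
      have hfr : (freqResp 𝒜 ℬ 𝒞 𝒟 ω) *ᵥ v = 𝒟.map Complex.ofReal *ᵥ v := by
        simp only [freqResp, ← hSdef, hSinv, Matrix.mul_zero, Matrix.zero_mul, zero_add,
          add_mulVec, zero_mulVec]
      rw [hfr]
      refine key 0 v _ ?_ (by simp)
      simp
  have hbound : ∀ ω : ℝ, specNorm (freqResp 𝒜 ℬ 𝒞 𝒟 ω) ≤ Real.sqrt (max 0 (γ^2 - ε)) := by
    intro ω
    set G := freqResp 𝒜 ℬ 𝒞 𝒟 ω with hGdef
    show ‖LinearMap.toContinuousLinearMap (Matrix.toEuclideanLin G)‖ ≤ _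
    refine ContinuousLinearMap.opNorm_le_bound _ (Real.sqrt_nonneg _) fun v => ?_
    set u : Fin m → ℂ := WithLp.equiv 2 _ v with hudef
    have hTv : ‖(LinearMap.toContinuousLinearMap (Matrix.toEuclideanLin G)) v‖^2
        = (star (G *ᵥ u) ⬝ᵥ (G *ᵥ u)).re := by
      rw [re_star_dot_self]
      rw [show ((LinearMap.toContinuousLinearMap (Matrix.toEuclideanLin G)) v)
        = (WithLp.equiv 2 (Fin l → ℂ)).symm (G *ᵥ u) from rfl]
      rw [EuclideanSpace.norm_eq, Real.sq_sqrt (by positivity)]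
      rfl
    have hv : ‖v‖^2 = (star u ⬝ᵥ u).re := by
      rw [re_star_dot_self, EuclideanSpace.norm_eq, Real.sq_sqrt (by positivity)]
      rfl
    have h := hG ω u
    rw [← hGdef] at h
    calc ‖(LinearMap.toContinuousLinearMap (Matrix.toEuclideanLin G)) v‖
        = Real.sqrt (‖(LinearMap.toContinuousLinearMap (Matrix.toEuclideanLin G)) v‖^2) :=
          (Real.sqrt_sq (norm_nonneg _)).symm
      _ ≤ Real.sqrt (max 0 (γ^2 - ε) * ‖v‖^2) := by
          apply Real.sqrt_le_sqrt
          rw [hTv]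
          calc (star (G *ᵥ u) ⬝ᵥ (G *ᵥ u)).re ≤ (γ^2 - ε) * (star u ⬝ᵥ u).re := h
            _ = (γ^2 - ε) * ‖v‖^2 := by rw [hv]
            _ ≤ max 0 (γ^2 - ε) * ‖v‖^2 := by
                apply mul_le_mul_of_nonneg_right (le_max_right _ _) (by positivity)
      _ = Real.sqrt (max 0 (γ^2 - ε)) * ‖v‖ := by
          rw [Real.sqrt_mul (le_max_left _ _), Real.sqrt_sq (norm_nonneg _)]
  have hfinal : Real.sqrt (max 0 (γ^2 - ε)) < γ := by
    rw [Real.sqrt_lt' hγ]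
    exact max_lt (by positivity) (by linarith)
  exact ⟨hHurwitz, lt_of_le_of_lt (ciSup_le hbound) hfinal⟩


end
end
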